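/- Every stabilizer group H on I = I₁ ⊕ I₂ of rank m admits a canonical generating set: there exist natural numbers r, s with r + 2s = m and elements z₁,…,z_r, w₁,…,w_s, w̄₁,…,w̄_s generating H (independent, so |H| = 2^{r+2s}) such that each A₂-restriction p_{A₂}(z_i) commutes with the A₂-restrictions of all listed generators, and each p_{A₂}(w_i) anticommutes with p_{A₂}(w̄_i) and commutes with the A₂-restrictions of all other listed generators. -/

import Mathlib

open scoped ComplexOrder Matrix

noncomputable section

/-- The single-qubit Pauli matrices `σ⁰, σˣ, σʸ, σᶻ`. -/
def pauli : Fin 4 → Matrix (Fin 2) (Fin 2) ℂ :=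
  ![1, !![0, 1; 1, 0], !![0, -Complex.I; Complex.I, 0], !![1, 0; 0, -1]]

/-- Configurations of the qubits on `I₁ ⊕ I₂`, presented in factorized form. -/
abbrev Config (I₁ I₂ : Type) := (I₁ → Fin 2) × (I₂ → Fin 2)

variable {I₁ I₂ : Type} [Fintype I₁] [Fintype I₂] [DecidableEq I₁] [DecidableEq I₂]

/-- The sign-free tensor product `⨂_{i ∈ I₁ ⊕ I₂} σ^{a(i)}` of single-qubit Pauli
matrices, as a matrix on the factorized configuration space. -/
def pauliTensor (a : I₁ ⊕ I₂ → Fin 4) :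
    Matrix (Config I₁ I₂) (Config I₁ I₂) ℂ :=
  fun c c' => ∏ i, pauli (a i) (Sum.elim c.1 c.2 i) (Sum.elim c'.1 c'.2 i)

/-- A Pauli operator on `I₁ ⊕ I₂`: `ε·⨂ᵢ σ^{a(i)}` with `ε ∈ {1,−1}`. -/
def IsPauli (M : Matrix (Config I₁ I₂) (Config I₁ I₂) ℂ) : Prop :=
  ∃ (ε : ℂ) (a : I₁ ⊕ I₂ → Fin 4), (ε = 1 ∨ ε = -1) ∧ M = ε • pauliTensor a

/-- A Pauli operator supported in `A₁`, i.e. acting trivially on all sites of `I₂`. -/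
def SupportedIn1 (M : Matrix (Config I₁ I₂) (Config I₁ I₂) ℂ) : Prop :=
  ∃ (ε : ℂ) (a : I₁ ⊕ I₂ → Fin 4), (ε = 1 ∨ ε = -1) ∧ M = ε • pauliTensor a ∧
    ∀ i : I₂, a (Sum.inr i) = 0

/-- A Pauli operator supported in `A₂`, i.e. acting trivially on all sites of `I₁`. -/
def SupportedIn2 (M : Matrix (Config I₁ I₂) (Config I₁ I₂) ℂ) : Prop :=
  ∃ (ε : ℂ) (a : I₁ ⊕ I₂ → Fin 4), (ε = 1 ∨ ε = -1) ∧ M = ε • pauliTensor a ∧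
    ∀ i : I₁, a (Sum.inl i) = 0

/-- A stabilizer group on `I₁ ⊕ I₂`: a finite abelian group of Pauli operators under
matrix multiplication not containing `-1`; every element is Hermitian and squares to
the identity. -/
structure StabilizerGroup (I₁ I₂ : Type) [Fintype I₁] [Fintype I₂]
    [DecidableEq I₁] [DecidableEq I₂] where
  carrier : Finset (Matrix (Config I₁ I₂) (Config I₁ I₂) ℂ)
  isPauli : ∀ g ∈ carrier, IsPauli g
  one_mem : (1 : Matrix (Config I₁ I₂) (Config I₁ I₂) ℂ) ∈ carrier
  mul_mem : ∀ g ∈ carrier, ∀ h ∈ carrier, g * h ∈ carrier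
  mul_comm : ∀ g ∈ carrier, ∀ h ∈ carrier, g * h = h * g
  neg_one_not_mem : (-1 : Matrix (Config I₁ I₂) (Config I₁ I₂) ℂ) ∉ carrier
  hermitian : ∀ g ∈ carrier, g.IsHermitian
  sq_eq_one : ∀ g ∈ carrier, g * g = 1

/-- The stabilizer density matrix `ρ = 2^{−N_A}·Σ_{g ∈ G} g`. -/
def stabDensity (G : StabilizerGroup I₁ I₂) :
    Matrix (Config I₁ I₂) (Config I₁ I₂) ℂ :=
  ((2 : ℂ) ^ (Fintype.card I₁ + Fintype.card I₂))⁻¹ • ∑ g ∈ G.carrier, g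

/-- The realignment of a matrix on a bipartite system:
`R_M[(c₁,c₁'),(c₂,c₂')] = M[(c₁,c₂),(c₁',c₂')]`. -/
def realign {C₁ C₂ : Type*} (M : Matrix (C₁ × C₂) (C₁ × C₂) ℂ) :
    Matrix (C₁ × C₁) (C₂ × C₂) ℂ :=
  fun p q => M (p.1, q.1) (p.2, q.2)

/-- The partial transpose on the second factor:
`M^{T₂}[(c₁,c₂),(c₁',c₂')] = M[(c₁,c₂'),(c₁',c₂)]`. -/
def ptranspose {C₁ C₂ R : Type*} (M : Matrix (C₁ × C₂) (C₁ × C₂) R) :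
    Matrix (C₁ × C₂) (C₁ × C₂) R :=
  fun c c' => M (c.1, c'.2) (c'.1, c.2)

/-- The trace norm `‖M‖₁ = Tr√(MᴴM)` of a complex matrix. -/
def traceNorm {m n : Type*} [Fintype m] [Fintype n] [DecidableEq n]
    (M : Matrix m n ℂ) : ℝ :=
  (((Matrix.posSemidef_conjTranspose_mul_self M).1.eigenvectorUnitary : Matrix n n ℂ) *
    Matrix.diagonal ((fun x : ℝ => (x : ℂ)) ∘ Real.sqrt ∘ (Matrix.posSemidef_conjTranspose_mul_self M).1.eigenvalues) *
    (star (Matrix.posSemidef_conjTranspose_mul_self M).1.eigenvectorUnitary : Matrix n n ℂ)).trace.re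

end

noncomputable section

variable {I₁ I₂ : Type} [Fintype I₁] [Fintype I₂] [DecidableEq I₁] [DecidableEq I₂]

/-- Sign-free tensor product of single-qubit Pauli matrices on `I₂` alone. -/
def pauliTensorOn2 (b : I₂ → Fin 4) : Matrix (I₂ → Fin 2) (I₂ → Fin 2) ℂ :=
  fun c c' => ∏ i, pauli (b i) (c i) (c' i)

open scoped Classical in
/-- The `A₂`-restriction `p_{A₂}(g)` of a Pauli operator `g = ε·(P₁ ⊗ P₂)`, namely the
sign-free tensor factor `P₂` acting on `I₂` (and `0` on non-Pauli matrices). -/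
def pA2 (M : Matrix (Config I₁ I₂) (Config I₁ I₂) ℂ) :
    Matrix (I₂ → Fin 2) (I₂ → Fin 2) ℂ :=
  if h : IsPauli M then
    pauliTensorOn2 (fun i => Classical.choose (Classical.choose_spec h) (Sum.inr i))
  else 0

/-- `z`, `w`, `wbar` form a canonical generating set with parameters `(r,s)` of the
group with carrier `Hcar`: they are independent generators of `Hcar` (so
`|Hcar| = 2^{r+2s}`), each `p_{A₂}(zᵢ)` commutes with the `A₂`-restrictions of all
listed generators, and each `p_{A₂}(wᵢ)` anticommutes with `p_{A₂}(w̄ᵢ)` and commutes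
with the `A₂`-restrictions of all other listed generators. -/
def CanonicalGenSet (Hcar : Finset (Matrix (Config I₁ I₂) (Config I₁ I₂) ℂ))
    (r s : ℕ) (z : Fin r → Matrix (Config I₁ I₂) (Config I₁ I₂) ℂ)
    (w wbar : Fin s → Matrix (Config I₁ I₂) (Config I₁ I₂) ℂ) : Prop :=
  (∀ i, z i ∈ Hcar) ∧ (∀ i, w i ∈ Hcar) ∧ (∀ i, wbar i ∈ Hcar) ∧
  (∀ g ∈ Hcar, g ∈ Submonoid.closure (Set.range z ∪ Set.range w ∪ Set.range wbar)) ∧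
  Hcar.card = 2 ^ (r + 2 * s) ∧
  (∀ i j, Commute (pA2 (z i)) (pA2 (z j))) ∧
  (∀ i j, Commute (pA2 (z i)) (pA2 (w j))) ∧
  (∀ i j, Commute (pA2 (z i)) (pA2 (wbar j))) ∧
  (∀ i j, Commute (pA2 (w i)) (pA2 (w j))) ∧
  (∀ i j, Commute (pA2 (wbar i)) (pA2 (wbar j))) ∧
  (∀ i j, i ≠ j → Commute (pA2 (w i)) (pA2 (wbar j))) ∧
  (∀ i, pA2 (w i) * pA2 (wbar i) = -(pA2 (wbar i) * pA2 (w i)))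

end

noncomputable section
namespace CGS

/-- label of the product of two Pauli matrices -/
def pMul : Fin 4 → Fin 4 → Fin 4 :=
  ![![0,1,2,3], ![1,0,3,2], ![2,3,0,1], ![3,2,1,0]]

/-- phase of the product of two Pauli matrices -/
def pPh : Fin 4 → Fin 4 → ℂ :=
  ![![1,1,1,1], ![1,1,Complex.I,-Complex.I], ![1,-Complex.I,1,Complex.I],
    ![1,Complex.I,-Complex.I,1]]

/-- single-site anticommutation indicator -/
def acP (x y : Fin 4) : Prop := x ≠ y ∧ x ≠ 0 ∧ y ≠ 0

instance : DecidablePred fun p : Fin 4 × Fin 4 => acP p.1 p.2 := fun _ => by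
  unfold acP; infer_instance

instance (x y : Fin 4) : Decidable (acP x y) := by unfold acP; infer_instance

lemma pauli_mul (a b : Fin 4) : pauli a * pauli b = pPh a b • pauli (pMul a b) := by
  fin_cases a <;> fin_cases b <;>
    simp [pauli, pPh, pMul, Matrix.one_fin_two, Matrix.vecHead, Matrix.vecTail] <;>
    ext i j <;> fin_cases i <;> fin_cases j <;>
    simp [Matrix.mul_apply, Fin.sum_univ_two, Complex.I_mul_I] <;> ring_nf

lemma pPh_ne_zero (a b : Fin 4) : pPh a b ≠ 0 := by
  fin_cases a <;> fin_cases b <;> simp [pPh, Complex.I_ne_zero, Matrix.vecHead, Matrix.vecTail]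

lemma pPh_swap (a b : Fin 4) : pPh b a = (if acP a b then -1 else 1) * pPh a b := by
  fin_cases a <;> fin_cases b <;> simp [pPh, acP, Matrix.vecHead, Matrix.vecTail] <;> ring_nf

lemma pMul_comm (a b : Fin 4) : pMul a b = pMul b a := by revert a b; decide

lemma acP_pMul (x y z : Fin 4) :
    (if acP (pMul x y) z then (1:ZMod 2) else 0) =
      (if acP x z then 1 else 0) + (if acP y z then 1 else 0) := by
  revert x y z; decide

-- single-site column picker with nonzero entry
def pick : Fin 4 → Fin 2 → Fin 2 := fun a x => if a = 1 ∨ a = 2 then x + 1 else x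

lemma pauli_pick_ne_zero (a : Fin 4) (x : Fin 2) : pauli a x (pick a x) ≠ 0 := by
  fin_cases a <;> fin_cases x <;>
    simp [pauli, pick, Matrix.one_apply, Complex.I_ne_zero, Matrix.vecHead, Matrix.vecTail]

-- single-site trace pairing
lemma pauli_pairing (a b : Fin 4) :
    ∑ x : Fin 2, ∑ y : Fin 2, (starRingEnd ℂ) (pauli a x y) * pauli b x y
      = if a = b then 2 else 0 := by
  fin_cases a <;> fin_cases b <;>
    simp [pauli, Fin.sum_univ_two, Matrix.one_apply, Matrix.vecHead, Matrix.vecTail,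
      Complex.conj_I] <;> ring_nf

variable {ι : Type} [Fintype ι] [DecidableEq ι]

/-- generic sign-free Pauli tensor -/
def ptensor (a : ι → Fin 4) : Matrix (ι → Fin 2) (ι → Fin 2) ℂ :=
  fun c c' => ∏ i, pauli (a i) (c i) (c' i)

lemma ptensor_mul (a b : ι → Fin 4) :
    ptensor a * ptensor b
      = (∏ i, pPh (a i) (b i)) • ptensor (fun i => pMul (a i) (b i)) := by
  ext c c'
  have key : ∀ i : ι, (pauli (a i) * pauli (b i)) (c i) (c' i)
      = pPh (a i) (b i) * pauli (pMul (a i) (b i)) (c i) (c' i) := by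
    intro i; rw [pauli_mul]; simp
  calc (ptensor a * ptensor b) c c'
      = ∑ d : ι → Fin 2, ∏ i, (pauli (a i) (c i) (d i) * pauli (b i) (d i) (c' i)) := by
        simp [Matrix.mul_apply, ptensor, Finset.prod_mul_distrib]
    _ = ∏ i, ∑ x : Fin 2, pauli (a i) (c i) x * pauli (b i) x (c' i) := by
        rw [Fintype.prod_sum fun i x => pauli (a i) (c i) x * pauli (b i) x (c' i)]
    _ = ∏ i, (pauli (a i) * pauli (b i)) (c i) (c' i) := by
        simp [Matrix.mul_apply]
    _ = _ := by
        simp only [key, Finset.prod_mul_distrib]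
        simp [ptensor]

lemma ptensor_entry_ne_zero (a : ι → Fin 4) (c : ι → Fin 2) :
    ptensor a c (fun i => pick (a i) (c i)) ≠ 0 :=
  Finset.prod_ne_zero_iff.2 fun i _ => pauli_pick_ne_zero (a i) (c i)

lemma ptensor_ne_zero (a : ι → Fin 4) : ptensor a ≠ 0 := by
  intro h
  exact ptensor_entry_ne_zero a (fun _ => 0) (by rw [h]; rfl)

lemma ptensor_pairing (a b : ι → Fin 4) :
    ∑ c : ι → Fin 2, ∑ c' : ι → Fin 2,
        (starRingEnd ℂ) (ptensor a c c') * ptensor b c c'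
      = ∏ i, (if a i = b i then (2:ℂ) else 0) := by
  set F : ι → Fin 2 × Fin 2 → ℂ := fun i p =>
    (starRingEnd ℂ) (pauli (a i) p.1 p.2) * pauli (b i) p.1 p.2 with hF
  have e := Equiv.arrowProdEquivProdArrow ι (fun _ => Fin 2) (fun _ => Fin 2)
  calc ∑ c : ι → Fin 2, ∑ c' : ι → Fin 2,
        (starRingEnd ℂ) (ptensor a c c') * ptensor b c c'
      = ∑ c : ι → Fin 2, ∑ c' : ι → Fin 2, ∏ i, F i (c i, c' i) := by
        apply Fintype.sum_congr; intro c
        apply Fintype.sum_congr; intro c'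
        simp [ptensor, map_prod, Finset.prod_mul_distrib, hF]
    _ = ∑ p : (ι → Fin 2) × (ι → Fin 2), ∏ i, F i (p.1 i, p.2 i) :=
        (Fintype.sum_prod_type (f := fun p : (ι → Fin 2) × (ι → Fin 2) =>
          ∏ i, F i (p.1 i, p.2 i))).symm
    _ = ∑ g : ι → Fin 2 × Fin 2, ∏ i, F i (g i) :=
        Equiv.sum_comp (Equiv.arrowProdEquivProdArrow ι (fun _ => Fin 2) (fun _ => Fin 2)).symm
          (fun g => ∏ i, F i (g i))
    _ = ∏ i, ∑ p : Fin 2 × Fin 2, F i p := (Fintype.prod_sum F).symm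
    _ = ∏ i, (if a i = b i then (2:ℂ) else 0) := by
        apply Fintype.prod_congr; intro i
        rw [Fintype.sum_prod_type]; exact pauli_pairing (a i) (b i)

/-- uniqueness of the Pauli decomposition -/
lemma ptensor_unique {a b : ι → Fin 4} {ε δ : ℂ} (hε : ε ≠ 0)
    (h : ε • ptensor a = δ • ptensor (ι := ι) b) : a = b ∧ ε = δ := by
  have hδ : δ ≠ 0 := by
    rintro rfl
    simp only [zero_smul, smul_eq_zero] at h
    exact ptensor_ne_zero a (h.resolve_left hε)
  have hba : ptensor b = (δ⁻¹ * ε) • ptensor (ι := ι) a := by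
    rw [mul_smul, h, ← mul_smul, inv_mul_cancel₀ hδ, one_smul]
  have hpair : ∑ c : ι → Fin 2, ∑ c' : ι → Fin 2,
      (starRingEnd ℂ) (ptensor a c c') * ptensor a c c' ≠ 0 := by
    rw [ptensor_pairing]
    simp
  have hpair' : (∏ i : ι, (if a i = b i then (2:ℂ) else 0)) ≠ 0 := by
    rw [← ptensor_pairing]
    calc ∑ c : ι → Fin 2, ∑ c' : ι → Fin 2,
          (starRingEnd ℂ) (ptensor a c c') * ptensor b c c'
        = (δ⁻¹ * ε) * ∑ c : ι → Fin 2, ∑ c' : ι → Fin 2,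
            (starRingEnd ℂ) (ptensor a c c') * ptensor a c c' := by
          rw [Finset.mul_sum]
          apply Fintype.sum_congr; intro c
          rw [Finset.mul_sum]
          apply Fintype.sum_congr; intro c'
          rw [hba]; simp [Matrix.smul_apply]; ring
      _ ≠ 0 := mul_ne_zero (mul_ne_zero (inv_ne_zero hδ) hε) hpair
  have hab2 : a = b := by
    funext i
    by_contra hne
    exact hpair' (Finset.prod_eq_zero (Finset.mem_univ i) (by simp [hne]))
  subst hab2
  refine ⟨rfl, ?_⟩
  obtain ⟨c, c', hcc⟩ : ∃ c c', ptensor a c c' ≠ 0 :=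
    ⟨fun _ => 0, _, ptensor_entry_ne_zero a (fun _ => 0)⟩
  have := congrFun (congrFun h c) c'
  simp only [Matrix.smul_apply, smul_eq_mul] at this
  exact mul_right_cancel₀ hcc this

-- commute / anticommute characterization
lemma prod_pPh_swap (a b : ι → Fin 4) :
    (∏ i, pPh (b i) (a i))
      = (-1 : ℂ) ^ (Finset.univ.filter fun i => acP (a i) (b i)).card
          * ∏ i, pPh (a i) (b i) := by
  calc (∏ i, pPh (b i) (a i))
      = ∏ i, ((if acP (a i) (b i) then (-1:ℂ) else 1) * pPh (a i) (b i)) := by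
        apply Fintype.prod_congr; intro i; exact pPh_swap (a i) (b i)
    _ = (∏ i, (if acP (a i) (b i) then (-1:ℂ) else 1)) * ∏ i, pPh (a i) (b i) :=
        Finset.prod_mul_distrib
    _ = _ := by
        congr 1
        rw [Finset.prod_ite, Finset.prod_const, Finset.prod_const, one_pow, mul_one]

lemma sum_indicator_eq (a b : ι → Fin 4) :
    (∑ i, if acP (a i) (b i) then (1 : ZMod 2) else 0)
      = ((Finset.univ.filter fun i => acP (a i) (b i)).card : ZMod 2) := by
  simp [Finset.sum_boole]

lemma ptensor_comm_iff (a b : ι → Fin 4) :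
    Commute (ptensor a) (ptensor b)
      ↔ (∑ i, if acP (a i) (b i) then (1 : ZMod 2) else 0) = 0 := by
  set k := (Finset.univ.filter fun i => acP (a i) (b i)).card with hk
  have hmulab := ptensor_mul a b
  have hmulba := ptensor_mul b a
  have hsame : (fun i => pMul (b i) (a i)) = fun i => pMul (a i) (b i) := by
    funext i; exact pMul_comm _ _
  rw [hsame] at hmulba
  rw [sum_indicator_eq, ZMod.natCast_eq_zero_iff, ← even_iff_two_dvd,
    ← neg_one_pow_eq_one_iff_even (R := ℂ) (by norm_num)]
  constructor
  · intro hc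
    have := hc
    rw [Commute, SemiconjBy, hmulab, hmulba, prod_pPh_swap a b] at this
    have hP := ptensor_entry_ne_zero (fun i => pMul (a i) (b i)) (fun _ => 0)
    have h2 := congrFun (congrFun this (fun _ => 0))
      (fun i => pick (pMul (a i) (b i)) ((fun _ : ι => (0:Fin 2)) i))
    simp only [Matrix.smul_apply, smul_eq_mul] at h2
    have h3 : (∏ i, pPh (a i) (b i))
        = (-1:ℂ) ^ k * ∏ i, pPh (a i) (b i) := mul_right_cancel₀ hP h2
    have h4 : (∏ i, pPh (a i) (b i)) ≠ 0 :=
      Finset.prod_ne_zero_iff.2 fun i _ => pPh_ne_zero _ _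
    have h5 : (-1:ℂ) ^ k * (∏ i, pPh (a i) (b i))
        = 1 * ∏ i, pPh (a i) (b i) := by rw [one_mul, ← h3]
    exact mul_right_cancel₀ h4 h5
  · intro hone
    have hone' : ((-1:ℂ)) ^ (Finset.univ.filter fun i => acP (a i) (b i)).card = 1 := hone
    rw [Commute, SemiconjBy, hmulab, hmulba, prod_pPh_swap a b, hone', one_mul]

lemma ptensor_anticomm (a b : ι → Fin 4)
    (h : ¬ Commute (ptensor a) (ptensor b)) :
    ptensor a * ptensor b = -(ptensor b * ptensor a) := by
  set k := (Finset.univ.filter fun i => acP (a i) (b i)).card with hk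
  have hodd : ¬ Even k := by
    intro he
    apply h
    rw [ptensor_comm_iff, sum_indicator_eq, ZMod.natCast_eq_zero_iff,
      ← even_iff_two_dvd]
    exact he
  have hsame : (fun i => pMul (b i) (a i)) = fun i => pMul (a i) (b i) := by
    funext i; exact pMul_comm _ _
  have hodd' : ((-1:ℂ)) ^ (Finset.univ.filter fun i => acP (a i) (b i)).card = -1 :=
    Odd.neg_one_pow (Nat.not_even_iff_odd.1 hodd)
  rw [ptensor_mul a b, ptensor_mul b a, hsame, prod_pPh_swap a b, hodd',
    neg_one_mul, neg_smul, neg_neg]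

-- ## Bridge to `pauliTensor` and `pA2`

lemma ptensor_zero : ptensor (ι := ι) (fun _ => (0 : Fin 4)) = 1 := by
  ext c c'
  by_cases h : c = c'
  · subst h
    simp [ptensor, pauli, Matrix.one_apply]
  · obtain ⟨i, hi⟩ := Function.ne_iff.1 h
    rw [Matrix.one_apply_ne h]
    exact Finset.prod_eq_zero (Finset.mem_univ i)
      (by simp [pauli, Matrix.one_apply, hi])

variable {I₁ I₂ : Type} [Fintype I₁] [Fintype I₂] [DecidableEq I₁] [DecidableEq I₂]

def cfgEquiv (I₁ I₂ : Type) : ((I₁ ⊕ I₂) → Fin 2) ≃ Config I₁ I₂ :=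
  Equiv.sumArrowEquivProdArrow I₁ I₂ (Fin 2)

lemma pauliTensor_eq (a : I₁ ⊕ I₂ → Fin 4) :
    pauliTensor a = (ptensor a).submatrix (cfgEquiv I₁ I₂).symm (cfgEquiv I₁ I₂).symm :=
  rfl

lemma pauliTensor_mul (a b : I₁ ⊕ I₂ → Fin 4) :
    pauliTensor a * pauliTensor b
      = (∏ i, pPh (a i) (b i)) • pauliTensor (fun i => pMul (a i) (b i)) := by
  rw [pauliTensor_eq a, pauliTensor_eq b,
    Matrix.submatrix_mul_equiv (ptensor a) (ptensor b) _ (cfgEquiv I₁ I₂).symm _,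
    ptensor_mul, pauliTensor_eq]
  ext c c'
  simp [Matrix.submatrix_apply]

lemma pauliTensor_unique {a b : I₁ ⊕ I₂ → Fin 4} {ε δ : ℂ} (hε : ε ≠ 0)
    (h : ε • pauliTensor a = δ • pauliTensor b) : a = b ∧ ε = δ := by
  apply ptensor_unique hε (ι := I₁ ⊕ I₂)
  ext c c'
  have := congrFun (congrFun h (cfgEquiv I₁ I₂ c)) (cfgEquiv I₁ I₂ c')
  simpa [pauliTensor_eq, Matrix.smul_apply, Matrix.submatrix_apply] using this

lemma one_decomp :
    (1 : Matrix (Config I₁ I₂) (Config I₁ I₂) ℂ)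
      = (1 : ℂ) • pauliTensor (fun _ => 0) := by
  rw [one_smul, pauliTensor_eq, ptensor_zero, Matrix.submatrix_one_equiv]

lemma pA2_eq {M : Matrix (Config I₁ I₂) (Config I₁ I₂) ℂ} (hP : IsPauli M)
    {ε : ℂ} {a : I₁ ⊕ I₂ → Fin 4} (hε : ε ≠ 0) (hM : M = ε • pauliTensor a) :
    pA2 M = ptensor (fun i => a (Sum.inr i)) := by
  have h0 : pA2 M = pauliTensorOn2
      (fun i => Classical.choose (Classical.choose_spec hP) (Sum.inr i)) := by
    simp only [pA2, dif_pos hP]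
  obtain ⟨hsgn, hM0⟩ := Classical.choose_spec (Classical.choose_spec hP)
  have hε₀ : Classical.choose hP ≠ 0 := by
    rcases hsgn with h1 | h1 <;> rw [h1] <;> norm_num
  have := pauliTensor_unique hε₀ (hM0.symm.trans hM)
  rw [h0, this.1]
  rfl

/-- commutation pairing of the `A₂`-restrictions -/
def BB (M N : Matrix (Config I₁ I₂) (Config I₁ I₂) ℂ) : ZMod 2 :=
  @ite _ (Commute (pA2 M) (pA2 N)) (Classical.dec _) 0 1

lemma BB_eq_sum {M N : Matrix (Config I₁ I₂) (Config I₁ I₂) ℂ}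
    (hM : IsPauli M) (hN : IsPauli N) {ε δ : ℂ} {a b : I₁ ⊕ I₂ → Fin 4}
    (hε : ε ≠ 0) (hδ : δ ≠ 0)
    (hMa : M = ε • pauliTensor a) (hNb : N = δ • pauliTensor b) :
    BB M N = ∑ i : I₂, if acP (a (Sum.inr i)) (b (Sum.inr i)) then (1 : ZMod 2) else 0 := by
  rw [BB, pA2_eq hM hε hMa, pA2_eq hN hδ hNb]
  by_cases hc : Commute (ptensor (fun i => a (Sum.inr i))) (ptensor (fun i => b (Sum.inr i)))
  · rw [if_pos hc, ((ptensor_comm_iff _ _).1 hc)]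
  · rw [if_neg hc]
    have hne := mt (ptensor_comm_iff (fun i => a (Sum.inr i)) (fun i => b (Sum.inr i))).2 hc
    revert hne
    generalize (∑ i : I₂, if acP (a (Sum.inr i)) (b (Sum.inr i)) then (1 : ZMod 2) else 0) = x
    revert x; decide

lemma BB_swap (M N : Matrix (Config I₁ I₂) (Config I₁ I₂) ℂ) : BB M N = BB N M := by
  unfold BB
  by_cases hc : Commute (pA2 M) (pA2 N)
  · rw [if_pos hc, if_pos hc.symm]
  · rw [if_neg hc, if_neg (fun hs => hc hs.symm)]

lemma BB_self (M : Matrix (Config I₁ I₂) (Config I₁ I₂) ℂ) : BB M M = 0 := by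
  unfold BB; rw [if_pos (Commute.refl _)]

lemma commute_of_BB_eq_zero {M N : Matrix (Config I₁ I₂) (Config I₁ I₂) ℂ}
    (h : BB M N = 0) : Commute (pA2 M) (pA2 N) := by
  by_contra hc
  rw [BB, if_neg hc] at h
  exact one_ne_zero h

variable (H : StabilizerGroup I₁ I₂)

lemma sign_ne_zero {ε : ℂ} (hε : ε = 1 ∨ ε = -1) : ε ≠ 0 := by
  rcases hε with rfl | rfl <;> norm_num

lemma BB_one_left {k : Matrix (Config I₁ I₂) (Config I₁ I₂) ℂ} (hk : k ∈ H.carrier) :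
    BB 1 k = 0 := by
  obtain ⟨γ, c, hγ, hkc⟩ := H.isPauli k hk
  rw [BB_eq_sum ⟨1, fun _ => 0, Or.inl rfl, one_decomp⟩ (H.isPauli k hk)
    one_ne_zero (sign_ne_zero hγ) one_decomp hkc]
  simp [acP]

lemma BB_mul_left {g h k : Matrix (Config I₁ I₂) (Config I₁ I₂) ℂ}
    (hg : g ∈ H.carrier) (hh : h ∈ H.carrier) (hk : k ∈ H.carrier) :
    BB (g * h) k = BB g k + BB h k := by
  obtain ⟨ε, a, hε, hga⟩ := H.isPauli g hg
  obtain ⟨δ, b, hδ, hhb⟩ := H.isPauli h hh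
  obtain ⟨γ, c, hγ, hkc⟩ := H.isPauli k hk
  have hmul : g * h = (ε * (δ * ∏ i, pPh (a i) (b i)))
      • pauliTensor (fun i => pMul (a i) (b i)) := by
    rw [hga, hhb, Matrix.smul_mul, Matrix.mul_smul, pauliTensor_mul, smul_smul, smul_smul, mul_assoc]
  have hco : (ε * (δ * ∏ i, pPh (a i) (b i))) ≠ 0 :=
    mul_ne_zero (sign_ne_zero hε) (mul_ne_zero (sign_ne_zero hδ)
      (Finset.prod_ne_zero_iff.2 fun i _ => pPh_ne_zero _ _))
  rw [BB_eq_sum (H.isPauli _ (H.mul_mem g hg h hh)) (H.isPauli k hk) hco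
      (sign_ne_zero hγ) hmul hkc,
    BB_eq_sum (H.isPauli g hg) (H.isPauli k hk) (sign_ne_zero hε) (sign_ne_zero hγ) hga hkc,
    BB_eq_sum (H.isPauli h hh) (H.isPauli k hk) (sign_ne_zero hδ) (sign_ne_zero hγ) hhb hkc,
    ← Finset.sum_add_distrib]
  exact Fintype.sum_congr _ _ fun i => acP_pMul _ _ _

lemma pA2_anticomm {g h : Matrix (Config I₁ I₂) (Config I₁ I₂) ℂ}
    (hg : g ∈ H.carrier) (hh : h ∈ H.carrier) (hBB : BB g h = 1) :
    pA2 g * pA2 h = -(pA2 h * pA2 g) := by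
  obtain ⟨ε, a, hε, hga⟩ := H.isPauli g hg
  obtain ⟨δ, b, hδ, hhb⟩ := H.isPauli h hh
  have hnc : ¬ Commute (pA2 g) (pA2 h) := by
    intro hc
    rw [BB, if_pos hc] at hBB
    exact zero_ne_one hBB
  rw [pA2_eq (H.isPauli g hg) (sign_ne_zero hε) hga,
    pA2_eq (H.isPauli h hh) (sign_ne_zero hδ) hhb] at hnc ⊢
  exact ptensor_anticomm _ _ hnc

-- ## The stabilizer group as a group, and generating sets

lemma zmod2_cases : ∀ c : ZMod 2, c = 0 ∨ c = 1 := by decide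

def GrpEl (H : StabilizerGroup I₁ I₂) : Type :=
  {x : Matrix (Config I₁ I₂) (Config I₁ I₂) ℂ // x ∈ H.carrier}

instance : CommGroup (GrpEl H) where
  mul x y := ⟨x.1 * y.1, H.mul_mem _ x.2 _ y.2⟩
  one := ⟨1, H.one_mem⟩
  inv x := x
  mul_assoc a b c := Subtype.ext (mul_assoc _ _ _)
  one_mul a := Subtype.ext (one_mul _)
  mul_one a := Subtype.ext (mul_one _)
  inv_mul_cancel a := Subtype.ext (H.sq_eq_one _ a.2)
  mul_comm a b := Subtype.ext (H.mul_comm _ a.2 _ b.2)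

instance : Fintype (GrpEl H) := by unfold GrpEl; infer_instance

@[simp] lemma GrpEl.mul_val (x y : GrpEl H) : (x * y).1 = x.1 * y.1 := rfl
@[simp] lemma GrpEl.one_val : (1 : GrpEl H).1 = 1 := rfl

lemma GrpEl.card (H : StabilizerGroup I₁ I₂) :
    Fintype.card (GrpEl H) = H.carrier.card := Fintype.card_coe _

/-- an elementary abelian 2-group of order `2^m` has `m` generators -/
lemma exists_mgen (H : StabilizerGroup I₁ I₂) (m : ℕ) (hm : H.carrier.card = 2 ^ m) :
    ∃ z : Fin m → Matrix (Config I₁ I₂) (Config I₁ I₂) ℂ,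
      (∀ i, z i ∈ H.carrier) ∧
      ∀ g ∈ H.carrier, g ∈ Submonoid.closure (Set.range z) := by
  haveI : Fact (Nat.Prime 2) := ⟨Nat.prime_two⟩
  letI A := Additive (GrpEl H)
  letI : Module (ZMod 2) A := AddCommGroup.zmodModule (by
    intro x
    rw [two_nsmul]
    show x + x = 0
    have : Additive.toMul x * Additive.toMul x = 1 :=
      Subtype.ext (H.sq_eq_one _ (Additive.toMul x).2)
    exact this)
  have hcard : Fintype.card A = 2 ^ m := by
    rw [show Fintype.card A = Fintype.card (GrpEl H) from Fintype.card_congr Additive.toMul, GrpEl.card, hm]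
  have hrank : Module.finrank (ZMod 2) A = m := by
    have := Module.card_eq_pow_finrank (K := ZMod 2) (V := A)
    rw [ZMod.card, hcard] at this
    exact (Nat.pow_right_injective le_rfl this.symm)
  let b : Module.Basis (Fin m) (ZMod 2) A :=
    Module.finBasisOfFinrankEq (ZMod 2) A hrank
  refine ⟨fun i => (Additive.toMul (b i) : GrpEl H).1, fun i => (Additive.toMul (b i)).2, ?_⟩
  intro g hg
  have hx : Additive.ofMul (⟨g, hg⟩ : GrpEl H) ∈ Submodule.span (ZMod 2) (Set.range b) := by
    rw [b.span_eq]; trivial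
  have key : ∀ (x : A), x ∈ Submodule.span (ZMod 2) (Set.range b) →
      (Additive.toMul x : GrpEl H).1 ∈
        Submonoid.closure (Set.range fun i => (Additive.toMul (b i) : GrpEl H).1) := by
    intro x hx
    induction hx using Submodule.span_induction with
    | mem y hy =>
      obtain ⟨i, rfl⟩ := hy
      exact Submonoid.subset_closure ⟨i, rfl⟩
    | zero => exact Submonoid.one_mem _
    | add y z _ _ hy hz => exact Submonoid.mul_mem _ hy hz
    | smul c y _ hy =>
      rcases zmod2_cases c with rfl | rfl
      · rw [zero_smul]; exact Submonoid.one_mem _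
      · rw [one_smul]; exact hy
  exact key _ hx

open scoped Classical in
/-- the index-4 subgroup of elements whose restriction commutes with two chosen
anticommuting elements -/
lemma exists_sub (H : StabilizerGroup I₁ I₂) (m : ℕ) (hm : H.carrier.card = 2 ^ m)
    {g0 h0 : Matrix (Config I₁ I₂) (Config I₁ I₂) ℂ}
    (hg0 : g0 ∈ H.carrier) (hh0 : h0 ∈ H.carrier) (hBB : BB g0 h0 = 1) :
    ∃ H' : StabilizerGroup I₁ I₂,
      H'.carrier = H.carrier.filter (fun x => BB x g0 = 0 ∧ BB x h0 = 0) ∧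
      2 ≤ m ∧ H'.carrier.card = 2 ^ (m - 2) := by
  set S := H.carrier.filter (fun x => BB x g0 = 0 ∧ BB x h0 = 0) with hS
  have hsub : ∀ {x}, x ∈ S → x ∈ H.carrier := fun hx => (Finset.mem_filter.1 hx).1
  refine ⟨⟨S, fun g hg => H.isPauli g (hsub hg), ?_, ?_,
    fun g hg h hh => H.mul_comm g (hsub hg) h (hsub hh),
    fun hmem => H.neg_one_not_mem (hsub hmem),
    fun g hg => H.hermitian g (hsub hg),
    fun g hg => H.sq_eq_one g (hsub hg)⟩, rfl, ?_, ?_⟩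
  · exact Finset.mem_filter.2 ⟨H.one_mem, BB_one_left H hg0, BB_one_left H hh0⟩
  · intro g hg h hh
    obtain ⟨hg1, hg2, hg3⟩ := Finset.mem_filter.1 hg
    obtain ⟨hh1, hh2, hh3⟩ := Finset.mem_filter.1 hh
    refine Finset.mem_filter.2 ⟨H.mul_mem g hg1 h hh1, ?_, ?_⟩
    · rw [BB_mul_left H hg1 hh1 hg0, hg2, hh2, add_zero]
    · rw [BB_mul_left H hg1 hh1 hh0, hg3, hh3, add_zero]
  all_goals {
    have main : 2 ≤ m ∧ S.card = 2 ^ (m - 2) := by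
      clear hS
      set φ : GrpEl H →* Multiplicative (ZMod 2 × ZMod 2) :=
        { toFun := fun x => Multiplicative.ofAdd (BB x.1 g0, BB x.1 h0)
          map_one' := by
            have h1 : BB (1 : Matrix (Config I₁ I₂) (Config I₁ I₂) ℂ) g0 = 0 :=
              BB_one_left H hg0
            have h2 : BB (1 : Matrix (Config I₁ I₂) (Config I₁ I₂) ℂ) h0 = 0 :=
              BB_one_left H hh0
            show Multiplicative.ofAdd (BB _ g0, BB _ h0) = 1
            rw [GrpEl.one_val, h1, h2]; rfl
          map_mul' := fun x y => by
            show Multiplicative.ofAdd (BB (x * y).1 g0, BB (x * y).1 h0) = _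
            rw [GrpEl.mul_val, BB_mul_left H x.2 y.2 hg0, BB_mul_left H x.2 y.2 hh0]
            rfl } with hφ
      have hφval : ∀ x : GrpEl H, φ x = Multiplicative.ofAdd (BB x.1 g0, BB x.1 h0) :=
        fun _ => rfl
      have hsurj : Function.Surjective φ := by
        intro u
        rcases hp : Multiplicative.toAdd u with ⟨u1, u2⟩
        have hval : ∃ x : GrpEl H, (BB x.1 g0, BB x.1 h0) = (u1, u2) := by
          rcases zmod2_cases u1 with rfl | rfl <;> rcases zmod2_cases u2 with rfl | rfl
          · refine ⟨1, ?_⟩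
            rw [GrpEl.one_val, BB_one_left H hg0, BB_one_left H hh0]
          · refine ⟨⟨g0, hg0⟩, ?_⟩
            rw [BB_self, hBB]
          · refine ⟨⟨h0, hh0⟩, ?_⟩
            rw [BB_swap h0 g0, hBB, BB_self]
          · refine ⟨⟨g0 * h0, H.mul_mem _ hg0 _ hh0⟩, ?_⟩
            rw [BB_mul_left H hg0 hh0 hg0, BB_mul_left H hg0 hh0 hh0,
              BB_self, BB_self, BB_swap h0 g0, hBB]
            simp
        obtain ⟨x, hx⟩ := hval
        refine ⟨x, ?_⟩
        rw [hφval, hx, ← hp]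
        simp
      have hcard1 : Nat.card (GrpEl H) = Nat.card (GrpEl H ⧸ φ.ker) * Nat.card φ.ker :=
        Subgroup.card_eq_card_quotient_mul_card_subgroup φ.ker
      have hquot : Nat.card (GrpEl H ⧸ φ.ker) = 4 := by
        rw [Nat.card_congr (QuotientGroup.quotientKerEquivOfSurjective φ hsurj).toEquiv,
          Nat.card_eq_fintype_card]
        decide
      have hG : Nat.card (GrpEl H) = 2 ^ m := by
        rw [Nat.card_eq_fintype_card, GrpEl.card, hm]
      have hker : 4 * Nat.card φ.ker = 2 ^ m := by rw [← hquot, ← hcard1, hG]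
      have hm2 : 2 ≤ m := by
        have hdvd : (2:ℕ) ^ 2 ∣ 2 ^ m := ⟨Nat.card φ.ker, by rw [← hker]; norm_num⟩
        exact (Nat.pow_dvd_pow_iff_le_right one_lt_two).1 hdvd
      have hkcard : Nat.card φ.ker = 2 ^ (m - 2) := by
        have h4 : 4 * Nat.card φ.ker = 4 * 2 ^ (m - 2) := by
          rw [hker, show (4:ℕ) = 2^2 by norm_num, ← pow_add]
          congr 1
          omega
        exact Nat.eq_of_mul_eq_mul_left (by norm_num) h4
      refine ⟨hm2, ?_⟩
      rw [← Fintype.card_coe S, ← hkcard, Nat.card_eq_fintype_card]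
      apply Fintype.card_congr
      refine ⟨fun x => ⟨⟨x.1, (Finset.mem_filter.1 x.2).1⟩, ?_⟩,
        fun y => ⟨y.1.1, Finset.mem_filter.2 ⟨y.1.2, ?_⟩⟩, fun x => rfl, fun y => rfl⟩
      · obtain ⟨h1, h2, h3⟩ := Finset.mem_filter.1 x.2
        show Multiplicative.ofAdd (BB x.1 g0, BB x.1 h0) = 1
        rw [h2, h3]; rfl
      · have hy := y.2
        rw [MonoidHom.mem_ker, hφval] at hy
        have : (BB y.1.1 g0, BB y.1.1 h0) = ((0 : ZMod 2), (0 : ZMod 2)) := hy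
        exact ⟨congrArg Prod.fst this, congrArg Prod.snd this⟩
    first | exact main.1 | exact main.2 }

lemma main_aux (m : ℕ) :
    ∀ (H : StabilizerGroup I₁ I₂), H.carrier.card = 2 ^ m →
      ∃ (r s : ℕ) (z : Fin r → Matrix (Config I₁ I₂) (Config I₁ I₂) ℂ)
        (w wbar : Fin s → Matrix (Config I₁ I₂) (Config I₁ I₂) ℂ),
        r + 2 * s = m ∧ CanonicalGenSet H.carrier r s z w wbar := by
  induction m using Nat.strong_induction_on with
  | _ m IH =>
  intro H hm
  by_cases hall : ∀ g ∈ H.carrier, ∀ h ∈ H.carrier, Commute (pA2 g) (pA2 h)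
  · obtain ⟨z, hzmem, hzgen⟩ := exists_mgen H m hm
    refine ⟨m, 0, z, Fin.elim0, Fin.elim0, by ring, hzmem, fun i => i.elim0,
      fun i => i.elim0, ?_, by simpa using hm,
      fun i j => hall _ (hzmem i) _ (hzmem j),
      fun i j => j.elim0, fun i j => j.elim0, fun i j => i.elim0,
      fun i j => i.elim0, fun i j _ => i.elim0, fun i => i.elim0⟩
    intro g hg
    exact Submonoid.closure_mono
      (Set.Subset.trans Set.subset_union_left Set.subset_union_left) (hzgen g hg)
  · push_neg at hall
    obtain ⟨g0, hg0, h0, hh0, hnc⟩ := hall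
    have hBB1 : BB g0 h0 = 1 := by rw [BB, if_neg hnc]
    have hBB1' : BB h0 g0 = 1 := by rw [BB_swap, hBB1]
    obtain ⟨H', hH'car, hm2, hcard'⟩ := exists_sub H m hm hg0 hh0 hBB1
    obtain ⟨r, s', z, w', wbar', hrs, hcgs⟩ := IH (m - 2) (by omega) H' hcard'
    obtain ⟨hz, hw, hwb, hgen, _hcard, hzz, hzw, hzwb, hww, hwbwb, hwwb, hac⟩ := hcgs
    have hsub : ∀ {x}, x ∈ H'.carrier → x ∈ H.carrier := by
      intro x hx; rw [hH'car] at hx; exact (Finset.mem_filter.1 hx).1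
    have hcg : ∀ {x}, x ∈ H'.carrier → BB x g0 = 0 := by
      intro x hx; rw [hH'car] at hx; exact (Finset.mem_filter.1 hx).2.1
    have hch : ∀ {x}, x ∈ H'.carrier → BB x h0 = 0 := by
      intro x hx; rw [hH'car] at hx; exact (Finset.mem_filter.1 hx).2.2
    set w : Fin (s' + 1) → Matrix (Config I₁ I₂) (Config I₁ I₂) ℂ := Fin.cons g0 w'
      with hwdef
    set wbar : Fin (s' + 1) → Matrix (Config I₁ I₂) (Config I₁ I₂) ℂ := Fin.cons h0 wbar'
      with hwbdef
    set S : Set (Matrix (Config I₁ I₂) (Config I₁ I₂) ℂ) :=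
      Set.range z ∪ Set.range w ∪ Set.range wbar with hSdef
    have hg0S : g0 ∈ S := Or.inl (Or.inr ⟨0, by rw [hwdef, Fin.cons_zero]⟩)
    have hh0S : h0 ∈ S := Or.inr ⟨0, by rw [hwbdef, Fin.cons_zero]⟩
    have hS'S : Set.range z ∪ Set.range w' ∪ Set.range wbar' ⊆ S := by
      rw [hSdef, hwdef, hwbdef]
      refine Set.union_subset_union (Set.union_subset_union subset_rfl ?_) ?_ <;>
        · rw [Fin.range_cons]; exact Set.subset_insert _ _
    refine ⟨r, s' + 1, z, w, wbar, by omega, fun i => hsub (hz i), ?_, ?_, ?_, ?_,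
      ?_, ?_, ?_, ?_, ?_, ?_, ?_⟩
    · intro i
      induction i using Fin.cases with
      | zero => simpa [hwdef] using hg0
      | succ i' => simpa [hwdef] using hsub (hw i')
    · intro i
      induction i using Fin.cases with
      | zero => simpa [hwbdef] using hh0
      | succ i' => simpa [hwbdef] using hsub (hwb i')
    · -- generation
      intro g hg
      have hcex : ∃ c, c ∈ H.carrier ∧ c * c = 1 ∧ BB c g0 = 0 ∧ BB c h0 = BB g h0 ∧
          c ∈ Submonoid.closure S := by
        rcases zmod2_cases (BB g h0) with hv | hv
        · exact ⟨1, H.one_mem, one_mul 1, BB_one_left H hg0,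
            by rw [BB_one_left H hh0, hv], Submonoid.one_mem _⟩
        · exact ⟨g0, hg0, H.sq_eq_one g0 hg0, BB_self g0,
            by rw [hBB1, hv], Submonoid.subset_closure hg0S⟩
      have hdex : ∃ d, d ∈ H.carrier ∧ d * d = 1 ∧ BB d h0 = 0 ∧ BB d g0 = BB g g0 ∧
          d ∈ Submonoid.closure S := by
        rcases zmod2_cases (BB g g0) with hv | hv
        · exact ⟨1, H.one_mem, one_mul 1, BB_one_left H hh0,
            by rw [BB_one_left H hg0, hv], Submonoid.one_mem _⟩
        · exact ⟨h0, hh0, H.sq_eq_one h0 hh0, BB_self h0,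
            by rw [hBB1', hv], Submonoid.subset_closure hh0S⟩
      obtain ⟨c, hcmem, hcc, hcg0, hch0, hccl⟩ := hcex
      obtain ⟨d, hdmem, hdd, hdh0, hdg0, hdcl⟩ := hdex
      have hgc : g * c ∈ H.carrier := H.mul_mem g hg c hcmem
      have humem : g * c * d ∈ H.carrier := H.mul_mem _ hgc d hdmem
      have hx2 : ∀ x : ZMod 2, x + x = 0 := by decide
      have hug : BB (g * c * d) g0 = 0 := by
        rw [BB_mul_left H hgc hdmem hg0, BB_mul_left H hg hcmem hg0, hcg0, hdg0,
          add_zero]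
        exact hx2 _
      have huh : BB (g * c * d) h0 = 0 := by
        rw [BB_mul_left H hgc hdmem hh0, BB_mul_left H hg hcmem hh0, hch0, hdh0,
          add_zero]
        exact hx2 _
      have humem' : g * c * d ∈ H'.carrier := by
        rw [hH'car]; exact Finset.mem_filter.2 ⟨humem, hug, huh⟩
      have hgu : g = g * c * d * d * c := by
        rw [mul_assoc (g * c) d d, hdd, mul_one, mul_assoc g c c, hcc, mul_one]
      rw [hgu]
      exact Submonoid.mul_mem _ (Submonoid.mul_mem _
        (Submonoid.closure_mono hS'S (hgen _ humem')) hdcl) hccl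
    · rw [hm]; congr 1; omega
    · exact hzz
    · intro i j
      induction j using Fin.cases with
      | zero =>
        rw [hwdef, Fin.cons_zero]
        exact commute_of_BB_eq_zero (hcg (hz i))
      | succ j' => simpa [hwdef] using hzw i j'
    · intro i j
      induction j using Fin.cases with
      | zero =>
        rw [hwbdef, Fin.cons_zero]
        exact commute_of_BB_eq_zero (hch (hz i))
      | succ j' => simpa [hwbdef] using hzwb i j'
    · intro i j
      induction i using Fin.cases with
      | zero =>
        induction j using Fin.cases with
        | zero => exact Commute.refl _
        | succ j' =>
          rw [hwdef, Fin.cons_zero, Fin.cons_succ]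
          exact (commute_of_BB_eq_zero (hcg (hw j'))).symm
      | succ i' =>
        induction j using Fin.cases with
        | zero =>
          rw [hwdef, Fin.cons_zero, Fin.cons_succ]
          exact commute_of_BB_eq_zero (hcg (hw i'))
        | succ j' => simpa [hwdef] using hww i' j'
    · intro i j
      induction i using Fin.cases with
      | zero =>
        induction j using Fin.cases with
        | zero => exact Commute.refl _
        | succ j' =>
          rw [hwbdef, Fin.cons_zero, Fin.cons_succ]
          exact (commute_of_BB_eq_zero (hch (hwb j'))).symm
      | succ i' =>
        induction j using Fin.cases with
        | zero =>
          rw [hwbdef, Fin.cons_zero, Fin.cons_succ]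
          exact commute_of_BB_eq_zero (hch (hwb i'))
        | succ j' => simpa [hwbdef] using hwbwb i' j'
    · intro i j hij
      induction i using Fin.cases with
      | zero =>
        induction j using Fin.cases with
        | zero => exact absurd rfl hij
        | succ j' =>
          rw [hwdef, hwbdef, Fin.cons_zero, Fin.cons_succ]
          exact (commute_of_BB_eq_zero (hcg (hwb j'))).symm
      | succ i' =>
        induction j using Fin.cases with
        | zero =>
          rw [hwdef, hwbdef, Fin.cons_zero, Fin.cons_succ]
          exact commute_of_BB_eq_zero (hch (hw i'))
        | succ j' =>
          rw [hwdef, hwbdef, Fin.cons_succ, Fin.cons_succ]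
          exact hwwb i' j' (fun hi => hij (by rw [hi]))
    · intro i
      induction i using Fin.cases with
      | zero =>
        rw [hwdef, hwbdef, Fin.cons_zero, Fin.cons_zero]
        exact pA2_anticomm H hg0 hh0 hBB1
      | succ i' => simpa [hwdef, hwbdef] using hac i'

end CGS
end
/-- Every stabilizer group of rank `m` admits a canonical generating set with
parameters `(r,s)`, `r + 2s = m`. -/
theorem exists_canonicalGenSet {I₁ I₂ : Type} [Fintype I₁] [Fintype I₂]
    [DecidableEq I₁] [DecidableEq I₂]
    (H : StabilizerGroup I₁ I₂) (m : ℕ) (hm : H.carrier.card = 2 ^ m) :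
    ∃ (r s : ℕ) (z : Fin r → Matrix (Config I₁ I₂) (Config I₁ I₂) ℂ)
      (w wbar : Fin s → Matrix (Config I₁ I₂) (Config I₁ I₂) ℂ),
      r + 2 * s = m ∧ CanonicalGenSet H.carrier r s z w wbar :=
  CGS.main_aux m H hm
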